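/- For any finite word w in the alphabet {a,b}, the Nielsen substitutions satisfy b·U(w*) = U(w)*·b and V(w*)·a = a·V(w)*, where w* denotes the reversal of w. In particular, if w is a palindrome then b·U(w) and V(w)·a are palindromes. -/
import Mathlib


/-- The continuant `K(c₁ … cₙ)`, i.e. the denominator of the finite continued
fraction `[0; c₁, …, cₙ]`, with `K([]) = 1`. -/
def contK : List ℕ → ℕ
  | [] => 1
  | [c] => c
  | c :: d :: l => c * contK (d :: l) + contK l

/-- The numerator `p` of the finite continued fraction `[0; c₁, …, cₙ]`. -/
def contP : List ℕ → ℕ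
  | [] => 0
  | _ :: t => contK t

/-- The size of the interval of numbers in `[0,1]` whose continued fraction
expansion begins with the word `w`. -/
noncomputable def cfsize (w : List ℕ) : ℝ :=
  1 / ((contK w : ℝ) * ((contK w : ℝ) + (contK w.dropLast : ℝ)))

/-- The Pell numbers, `P 0 = 0`, `P 1 = 1`, `P (k+1) = 2 P k + P (k-1)`. -/
def pell : ℕ → ℕ
  | 0 => 0
  | 1 => 1
  | n + 2 => 2 * pell (n + 1) + pell n

/-- Words in the alphabet `{a, b}` encoded as lists of booleans, with
`a = [false]` and `b = [true]`. The Nielsen substitution `U : a ↦ ab, b ↦ b`. -/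
def subU : List Bool → List Bool :=
  fun l => l.flatMap (fun x => if x then [true] else [false, true])

/-- The Nielsen substitution `V : a ↦ a, b ↦ ab`. -/
def subV : List Bool → List Bool :=
  fun l => l.flatMap (fun x => if x then [false, true] else [false])

/-- `b·U(w*) = U(w)*·b` and `V(w*)·a = a·V(w)*`; in particular, if `w` is a
palindrome then so are `b·U(w)` and `V(w)·a`. -/
lemma subU_append (u v : List Bool) : subU (u ++ v) = subU u ++ subU v := by
  simp [subU]

lemma subV_append (u v : List Bool) : subV (u ++ v) = subV u ++ subV v := by
  simp [subV]

theorem nielsen_reverse (w : List Bool) :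
    ([true] ++ subU w.reverse = (subU w).reverse ++ [true] ∧
        subV w.reverse ++ [false] = [false] ++ (subV w).reverse) ∧
      (w.reverse = w →
        ([true] ++ subU w).reverse = [true] ++ subU w ∧
          (subV w ++ [false]).reverse = subV w ++ [false]) := by
  have hU : ∀ v : List Bool, [true] ++ subU v.reverse = (subU v).reverse ++ [true] := by
    intro v
    induction v with
    | nil => rfl
    | cons x t ih =>
      rw [List.reverse_cons, subU_append, ← List.append_assoc, ih,
        show x :: t = [x] ++ t from rfl, subU_append, List.reverse_append]
      cases x <;> simp [subU]
  have hV : ∀ v : List Bool, subV v.reverse ++ [false] = [false] ++ (subV v).reverse := by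
    intro v
    induction v with
    | nil => rfl
    | cons x t ih =>
      rw [List.reverse_cons, subV_append,
        show x :: t = [x] ++ t from rfl, subV_append, List.reverse_append,
        ← List.append_assoc, List.append_assoc (subV t.reverse)]
      cases x
      · show subV t.reverse ++ ([false] ++ [false]) = [false] ++ ((subV t).reverse ++ [false])
        rw [← List.append_assoc, ih, List.append_assoc]
      · show subV t.reverse ++ ([false] ++ [true, false]) =
          [false] ++ ((subV t).reverse ++ [true, false])
        rw [← List.append_assoc, ih, List.append_assoc]
  refine ⟨⟨hU w, hV w⟩, fun hp => ⟨?_, ?_⟩⟩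
  · have := hU w; rw [hp] at this
    simp [List.reverse_append, ← this]
  · have := hV w; rw [hp] at this
    simp [List.reverse_append, this]
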